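/- (Optimality of η = 1/√2 for the Hadamard gate.) Let {K_i} and {L_i} be finite families of 2×2 complex matrices satisfying Σ_i K_i† K_i = Σ_i L_i† L_i = I, let F_0 be a 2×2 matrix with F_0|0⟩ = |0⟩, and let η > 0 be a real number such that Σ_i K_i ⊗ conj(L_i) = η · U_B† (F_0 ⊗ H) U_B, where U_B = (H⊗I)·CNOT. Then η ≤ 1/√2. -/

import Mathlib

open Matrix Kronecker BigOperators

/-- Single-qubit basis index. -/
abbrev Q2 : Type := ZMod 2

/-- Hadamard `H = (1/√2)[[1,1],[1,-1]]`. -/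
noncomputable def Hm : Matrix Q2 Q2 ℂ :=
  Matrix.of fun i j => (Real.sqrt 2 : ℂ)⁻¹ * (if i = 1 ∧ j = 1 then -1 else 1)

/-- `CNOT(|a⟩⊗|b⟩) = |a⟩⊗|a⊕b⟩`. -/
def CNOTm : Matrix (Q2 × Q2) (Q2 × Q2) ℂ :=
  Matrix.of fun p q => if p.1 = q.1 ∧ p.2 = q.1 + q.2 then 1 else 0

/-- The Bell circuit `U_B = (H⊗I)·CNOT`. -/
noncomputable def UB : Matrix (Q2 × Q2) (Q2 × Q2) ℂ :=
  (Hm ⊗ₖ (1 : Matrix Q2 Q2 ℂ)) * CNOTm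

/-- The basis vector `|0⟩`. -/
def e0 : Q2 → ℂ := fun j => if j = 0 then 1 else 0

/-! ### Auxiliary material -/

noncomputable def Hc : ℂ := (Real.sqrt 2 : ℂ)⁻¹

/-- The weight functional matrix. -/
noncomputable def Wm : Q2 × Q2 → Q2 × Q2 → ℂ :=
  fun p q => if p.1 = p.2 + 1 ∧ q.1 = q.2 + 1 then -1 else 1

lemma sumQ2 {M : Type*} [AddCommMonoid M] (f : Q2 → M) : ∑ x : Q2, f x = f 0 + f 1 :=
  Fin.sum_univ_two f

lemma q2cases (a : Q2) : a = 0 ∨ a = 1 := by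
  fin_cases a
  · exact Or.inl rfl
  · exact Or.inr rfl

lemma UB_apply (p q : Q2 × Q2) :
    UB p q = Hm p.1 q.1 * (if p.2 = q.1 + q.2 then 1 else 0) := by
  cases p with | mk a b =>
  cases q with | mk c d =>
  simp only [UB, Matrix.mul_apply, Fintype.sum_prod_type, sumQ2, kroneckerMap_apply,
    CNOTm, Matrix.one_apply, Matrix.of_apply]
  rcases q2cases a with rfl|rfl <;> rcases q2cases b with rfl|rfl <;>
    rcases q2cases c with rfl|rfl <;> rcases q2cases d with rfl|rfl <;> simp (config := { decide := true })

lemma Hm00 : Hm 0 0 = Hc := by simp [Hm, Hc]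
lemma Hm01 : Hm 0 1 = Hc := by simp [Hm, Hc]
lemma Hm10 : Hm 1 0 = Hc := by simp [Hm, Hc]
lemma Hm11 : Hm 1 1 = -Hc := by simp [Hm, Hc]
lemma star_Hc : star Hc = Hc := by simp [Hc, ← Complex.ofReal_inv]

lemma G_apply (F0 : Matrix Q2 Q2 ℂ) (a b c d : Q2) :
    (UBᴴ * (F0 ⊗ₖ Hm) * UB) (a,b) (c,d)
      = Hm (a+b) (c+d) * (∑ r : Q2, ∑ s : Q2, Hm r a * F0 r s * Hm s c) := by
  simp only [Matrix.mul_apply, Matrix.conjTranspose_apply, UB_apply, kroneckerMap_apply,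
    Fintype.sum_prod_type, sumQ2]
  rcases q2cases a with rfl|rfl <;> rcases q2cases b with rfl|rfl <;>
    rcases q2cases c with rfl|rfl <;> rcases q2cases d with rfl|rfl <;>
  · simp (config := { decide := true }) only [show ((0:Q2)+0=0) by decide,
      show ((0:Q2)+1=1) by decide, show ((1:Q2)+0=1) by decide, show ((1:Q2)+1=0) by decide,
      Hm00, Hm01, Hm10, Hm11, star_Hc, star_neg, star_zero, star_one,
      if_true, if_false, mul_one, mul_zero, zero_mul, one_mul,
      mul_neg, neg_mul, neg_neg, zero_add, add_zero, starRingEnd_apply, reduceIte]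
    ring

/-- Parallelogram-type identity for the weight functional. -/
lemma Wm_sq_sum (k : Q2 → Q2 → ℂ) :
    ∑ b : Q2, ∑ d : Q2, Complex.normSq (∑ a : Q2, ∑ c : Q2, Wm (a,b) (c,d) * k a c)
      = 4 * ∑ a : Q2, ∑ c : Q2, Complex.normSq (k a c) := by
  simp (config := { decide := true }) only [sumQ2, Wm, neg_mul, one_mul, if_true, if_false]
  simp only [Complex.normSq_apply, Complex.add_re, Complex.add_im, Complex.neg_re,
    Complex.neg_im]
  ring

/-- Total Hilbert–Schmidt mass of a Kraus family is 2. -/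
lemma kraus_mass {ι : Type} [Fintype ι] (L : ι → Matrix Q2 Q2 ℂ)
    (hL : ∑ i, (L i)ᴴ * L i = 1) :
    ∑ i, ∑ b : Q2, ∑ d : Q2, Complex.normSq (L i b d) = 2 := by
  have key : ∀ d : Q2, ∑ i, ∑ b : Q2, Complex.normSq (L i b d) = 1 := by
    intro d
    have h := congrFun (congrFun hL d) d
    simp only [Matrix.sum_apply, Matrix.mul_apply, Matrix.conjTranspose_apply,
      Matrix.one_apply_eq, sumQ2] at h
    have h2 : (↑(∑ i, ∑ b : Q2, Complex.normSq (L i b d)) : ℂ) = 1 := by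
      push_cast
      simp only [sumQ2, Complex.normSq_eq_conj_mul_self, starRingEnd_apply]
      exact h
    exact_mod_cast h2
  rw [show (∑ i, ∑ b : Q2, ∑ d : Q2, Complex.normSq (L i b d))
      = (∑ i, ∑ b : Q2, Complex.normSq (L i b 0))
        + (∑ i, ∑ b : Q2, Complex.normSq (L i b 1)) from by
    simp [sumQ2, Finset.sum_add_distrib], key 0, key 1]
  norm_num

/-- Optimality of `η = 1/√2` for the Hadamard gate: any CPTP Kraus families
`{Kᵢ}, {Lᵢ}` with `∑ᵢ Kᵢ ⊗ conj(Lᵢ) = η·U_B†(F₀⊗H)U_B`, where `F₀|0⟩ = |0⟩`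
and `η > 0`, satisfy `η ≤ 1/√2`. -/
theorem hadamard_eta_le_inv_sqrt_two
    {ι : Type} [Fintype ι]
    (K L : ι → Matrix Q2 Q2 ℂ)
    (hK : ∑ i, (K i)ᴴ * K i = 1)
    (hL : ∑ i, (L i)ᴴ * L i = 1)
    (F0 : Matrix Q2 Q2 ℂ) (hF0 : F0.mulVec e0 = e0)
    (η : ℝ) (hη : 0 < η)
    (heq : ∑ i, K i ⊗ₖ (L i).map (starRingEnd ℂ)
      = (η : ℂ) • (UBᴴ * (F0 ⊗ₖ Hm) * UB)) :
    η ≤ (Real.sqrt 2)⁻¹ := by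
  have h00 : F0 0 0 = 1 := by
    have := congrFun hF0 0
    simpa [Matrix.mulVec, dotProduct, sumQ2, e0] using this
  have h10 : F0 1 0 = 0 := by
    have := congrFun hF0 1
    simpa [Matrix.mulVec, dotProduct, sumQ2, e0] using this
  have hc : Hc * Hc = 1/2 := by
    rw [Hc, ← mul_inv, ← Complex.ofReal_mul, Real.mul_self_sqrt (by norm_num)]
    norm_num
  set V : ι → Q2 → Q2 → ℂ := fun i b d => ∑ a : Q2, ∑ c : Q2, Wm (a,b) (c,d) * K i a c with hV
  -- main scalar equation
  have hE : (∑ i, ∑ b : Q2, ∑ d : Q2, (starRingEnd ℂ) (L i b d) * V i b d)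
      = (η : ℂ) * (8 * Hc) := by
    have e1 : (∑ p : Q2 × Q2, ∑ q : Q2 × Q2,
          Wm p q * ((∑ i, K i ⊗ₖ (L i).map (starRingEnd ℂ)) p q))
        = ∑ i, ∑ b : Q2, ∑ d : Q2, (starRingEnd ℂ) (L i b d) * V i b d := by
      simp only [Matrix.sum_apply, kroneckerMap_apply, Matrix.map_apply, Finset.mul_sum,
        Fintype.sum_prod_type, sumQ2, hV]
      rw [← Finset.sum_add_distrib, ← Finset.sum_add_distrib, ← Finset.sum_add_distrib,
        ← Finset.sum_add_distrib, ← Finset.sum_add_distrib, ← Finset.sum_add_distrib,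
        ← Finset.sum_add_distrib, ← Finset.sum_add_distrib, ← Finset.sum_add_distrib,
        ← Finset.sum_add_distrib, ← Finset.sum_add_distrib, ← Finset.sum_add_distrib,
        ← Finset.sum_add_distrib, ← Finset.sum_add_distrib, ← Finset.sum_add_distrib]
      refine Finset.sum_congr rfl fun i _ => by ring
    have e2 : (∑ p : Q2 × Q2, ∑ q : Q2 × Q2,
          Wm p q * (((η : ℂ) • (UBᴴ * (F0 ⊗ₖ Hm) * UB)) p q))
        = (η : ℂ) * (8 * Hc) := by
      have hg : (∑ p : Q2 × Q2, ∑ q : Q2 × Q2,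
          Wm p q * ((UBᴴ * (F0 ⊗ₖ Hm) * UB) p q)) = 8 * Hc := by
        have hGten : ∀ p q : Q2 × Q2, (UBᴴ * (F0 ⊗ₖ Hm) * UB) p q
            = Hm (p.1+p.2) (q.1+q.2)
              * (∑ r : Q2, ∑ s : Q2, Hm r p.1 * F0 r s * Hm s q.1) := by
          intro p q; cases p; cases q; exact G_apply F0 _ _ _ _
        simp only [hGten]
        simp only [Fintype.sum_prod_type, sumQ2, Wm, h00, h10,
          show ((0:Q2)+0=0) by decide, show ((0:Q2)+1=1) by decide,
          show ((1:Q2)+0=1) by decide, show ((1:Q2)+1=0) by decide,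
          Hm00, Hm01, Hm10, Hm11]
        norm_num [Prod.ext_iff, show (0:Q2) ≠ 1 by decide, show (1:Q2) ≠ 0 by decide]
        linear_combination (16 * Hc) * hc
      simp only [Matrix.smul_apply, smul_eq_mul]
      rw [← hg]
      simp only [Finset.mul_sum]
      exact Finset.sum_congr rfl fun p _ => Finset.sum_congr rfl fun q _ => by ring
    rw [← e1, heq, e2]
  -- the Cauchy–Schwarz bound
  set S : ℝ := ∑ i, ∑ b : Q2, ∑ d : Q2, ‖L i b d‖ * ‖V i b d‖ with hS
  have habs : ‖(η : ℂ) * (8 * Hc)‖ ≤ S := by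
    rw [← hE]
    calc ‖∑ i, ∑ b : Q2, ∑ d : Q2, (starRingEnd ℂ) (L i b d) * V i b d‖
        ≤ ∑ i, ‖∑ b : Q2, ∑ d : Q2, (starRingEnd ℂ) (L i b d) * V i b d‖ :=
          norm_sum_le _ _
      _ ≤ ∑ i, ∑ b : Q2, ‖∑ d : Q2, (starRingEnd ℂ) (L i b d) * V i b d‖ :=
          Finset.sum_le_sum fun i _ => norm_sum_le _ _
      _ ≤ ∑ i, ∑ b : Q2, ∑ d : Q2, ‖(starRingEnd ℂ) (L i b d) * V i b d‖ :=
          Finset.sum_le_sum fun i _ => Finset.sum_le_sum fun b _ => norm_sum_le _ _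
      _ = S := by simp [hS, norm_mul, Complex.norm_conj]
  have hcs := Finset.sum_mul_sq_le_sq_mul_sq Finset.univ
    (fun j : ι × Q2 × Q2 => ‖L j.1 j.2.1 j.2.2‖)
    (fun j : ι × Q2 × Q2 => ‖V j.1 j.2.1 j.2.2‖)
  simp only [Fintype.sum_prod_type] at hcs
  have hLmass : ∑ i, ∑ b : Q2, ∑ d : Q2, (‖L i b d‖)^2 = 2 := by
    simpa [Complex.sq_norm] using kraus_mass L hL
  have hVmass : ∑ i, ∑ b : Q2, ∑ d : Q2, (‖V i b d‖)^2 = 8 := by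
    have hKmass := kraus_mass K hK
    have : ∀ i, ∑ b : Q2, ∑ d : Q2, Complex.normSq (V i b d)
        = 4 * ∑ a : Q2, ∑ c : Q2, Complex.normSq (K i a c) := fun i => Wm_sq_sum (K i)
    calc ∑ i, ∑ b : Q2, ∑ d : Q2, (‖V i b d‖)^2
        = ∑ i, ∑ b : Q2, ∑ d : Q2, Complex.normSq (V i b d) := by simp [Complex.sq_norm]
      _ = ∑ i, 4 * ∑ a : Q2, ∑ c : Q2, Complex.normSq (K i a c) :=
          Finset.sum_congr rfl fun i _ => this i
      _ = 4 * ∑ i, ∑ a : Q2, ∑ c : Q2, Complex.normSq (K i a c) := by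
          rw [Finset.mul_sum]
      _ = 8 := by rw [hKmass]; norm_num
  have hS2 : S^2 ≤ 16 := by
    calc S^2 ≤ (∑ i, ∑ b : Q2, ∑ d : Q2, (‖L i b d‖)^2)
        * (∑ i, ∑ b : Q2, ∑ d : Q2, (‖V i b d‖)^2) := hcs
      _ = 16 := by rw [hLmass, hVmass]; norm_num
  have hSnn : 0 ≤ S := by
    refine Finset.sum_nonneg fun i _ => Finset.sum_nonneg fun b _ =>
      Finset.sum_nonneg fun d _ => ?_
    positivity
  have hS4 : S ≤ 4 := by nlinarith
  have hval : ‖(η : ℂ) * (8 * Hc)‖ = η * (8 * (Real.sqrt 2)⁻¹) := by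
    simp [Hc, norm_mul, norm_inv, Complex.norm_real, abs_of_pos hη,
      abs_of_nonneg (Real.sqrt_nonneg 2)]
  rw [hval] at habs
  have hsp : (0:ℝ) < Real.sqrt 2 := by positivity
  have hs2 : Real.sqrt 2 * Real.sqrt 2 = 2 := Real.mul_self_sqrt (by norm_num)
  have hinv : (Real.sqrt 2)⁻¹ * Real.sqrt 2 = 1 := inv_mul_cancel₀ (ne_of_gt hsp)
  nlinarith [habs, hS4, hsp, hs2, hinv, mul_pos hη hsp]
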